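/- Let X, Y be Banach spaces and suppose the set NA(X, Y*) − NA(X, Y*) (differences of norm-attaining operators) is not dense in L(X, Y*). Then NA(X, Y*) is nowhere dense in L(X, Y*): its closure has empty interior. -/

import Mathlib

set_option maxHeartbeats 1000000
set_option synthInstance.maxHeartbeats 2000000


/-- If the set of differences of norm-attaining operators `X → Y*` is not
dense in `L(X, Y*)`, then the set of norm-attaining operators is nowhere dense in `L(X, Y*)`. -/
theorem NA_nowhereDense_of_differences_not_dense
    (X Y : Type*) [NormedAddCommGroup X] [NormedSpace ℝ X] [CompleteSpace X]
    [NormedAddCommGroup Y] [NormedSpace ℝ Y] [CompleteSpace Y]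
    (NA : Set (X →L[ℝ] (Y →L[ℝ] ℝ)))
    (hNA : NA = {G | ∃ x : X, ‖x‖ = 1 ∧ ‖G x‖ = ‖G‖})
    (h : ¬ Dense (Set.image2 (· - ·) NA NA)) :
    interior (closure NA) = ∅ := by
  haveI : IsBoundedSMul ℝ (X →L[ℝ] (Y →L[ℝ] ℝ)) :=
    NormedSpace.toIsBoundedSMul (𝕜 := ℝ) (E := X →L[ℝ] (Y →L[ℝ] ℝ))
  haveI : NormSMulClass ℝ (X →L[ℝ] (Y →L[ℝ] ℝ)) :=
    NormedSpace.toNormSMulClass (𝕜 := ℝ) (E := X →L[ℝ] (Y →L[ℝ] ℝ))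
  by_contra hne
  apply h
  obtain ⟨U, hU⟩ := Set.nonempty_iff_ne_empty.2 hne
  obtain ⟨r, hr, hball⟩ := Metric.isOpen_iff.1 isOpen_interior U hU
  have hballcl : Metric.ball U r ⊆ closure NA := hball.trans interior_subset
  have hUcl : U ∈ closure NA := interior_subset hU
  -- NA is closed under scalar multiplication
  have hsmul : ∀ (c : ℝ), ∀ G ∈ NA, c • G ∈ NA := by
    intro c G hG
    rw [hNA] at hG ⊢
    obtain ⟨x, hx1, hx2⟩ := hG
    refine ⟨x, hx1, ?_⟩
    simp only [ContinuousLinearMap.smul_apply, norm_smul, hx2]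
  set S := Set.image2 (· - ·) NA NA with hS
  have hSsmul : ∀ (c : ℝ), ∀ A ∈ S, c • A ∈ S := by
    intro c A hA
    obtain ⟨G, hG, H, hH, rfl⟩ := hA
    beta_reduce
    rw [show c • (G - H) = c • G - c • H by ext; simp; ring]
    exact Set.mem_image2_of_mem (hsmul c G hG) (hsmul c H hH)
  intro T
  -- choose a small scalar c
  set c : ℝ := r / (2 * (‖T‖ + 1)) with hc
  have hTpos : (0:ℝ) < ‖T‖ + 1 := by positivity
  have hcpos : 0 < c := by positivity
  have hsmall : ‖c • T‖ < r := by
    have hns : ‖c • T‖ = ‖c‖ * ‖T‖ := norm_smul c T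
    rw [hns, Real.norm_eq_abs, abs_of_pos hcpos]
    calc c * ‖T‖ < c * (2 * (‖T‖ + 1)) := by
          apply mul_lt_mul_of_pos_left _ hcpos
          nlinarith [norm_nonneg T]
      _ = r := by rw [hc]; field_simp
  have hmem : U + c • T ∈ closure NA := by
    refine hballcl (Metric.mem_ball.2 ?_)
    calc dist (U + c • T) U = ‖U + c • T - U‖ := dist_eq_norm (E := X →L[ℝ] (Y →L[ℝ] ℝ)) _ _
      _ = ‖c • T‖ := by congr 1; abel
      _ < r := hsmall
  have h1 : c • T ∈ closure S := by
    haveI : ContinuousSub (X →L[ℝ] (Y →L[ℝ] ℝ)) :=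
      IsTopologicalAddGroup.to_continuousSub (G := X →L[ℝ] (Y →L[ℝ] ℝ))
    have := map_mem_closure₂
      (continuous_sub : Continuous fun p : (X →L[ℝ] (Y →L[ℝ] ℝ)) × (X →L[ℝ] (Y →L[ℝ] ℝ)) => p.1 - p.2) hmem hUcl
      (fun a ha b hb => Set.mem_image2_of_mem ha hb)
    have e : U + c • T - U = c • T := by abel
    simpa [hS, e] using this
  have h2 : c⁻¹ • (c • T) ∈ closure S :=
    map_mem_closure (continuous_const_smul c⁻¹) h1 (hSsmul c⁻¹)
  rwa [smul_smul, inv_mul_cancel₀ (ne_of_gt hcpos), one_smul] at h2
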